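/- Define V : ℝ³ → ℝ³ by V(x,y,z) = 2(x²+y²+1)^{−3/2}·(−y, x, 1) and p : ℝ³ → ℝ by p(x,y,z) = −(x²+y²+1)^{−2}. Then V is a steady incompressible Euler flow with pressure p: at every point of ℝ³ one has div V = 0 and (V·∇)V = −∇p. (Since V and p are independent of z, this yields a steady Euler flow on ℝ² × S¹ whose Bernoulli function is P(x,y,z) = (x²+y²+1)^{−2}.) -/

import Mathlib

open scoped BigOperators

/-- Partial derivative `∂ⱼ f` of a scalar function on `ℝ³`. -/
noncomputable def pd (j : Fin 3) (f : (Fin 3 → ℝ) → ℝ) (x : Fin 3 → ℝ) : ℝ :=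
  fderiv ℝ f x (Pi.single j 1)

/-- The explicit vector field `V(x,y,z) = 2(x²+y²+1)^{-3/2}·(−y, x, 1)`. -/
noncomputable def Vex (x : Fin 3 → ℝ) : Fin 3 → ℝ :=
  fun i => (2 * ((x 0) ^ 2 + (x 1) ^ 2 + 1) ^ (-(3/2) : ℝ)) * ![-(x 1), x 0, 1] i

/-- The explicit pressure `p(x,y,z) = −(x²+y²+1)^{-2}`. -/
noncomputable def pex (x : Fin 3 → ℝ) : ℝ :=
  -(((x 0) ^ 2 + (x 1) ^ 2 + 1) ^ 2)⁻¹

noncomputable def Dlin (x : Fin 3 → ℝ) : (Fin 3 → ℝ) →L[ℝ] ℝ :=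
  (2 * x 0) • ContinuousLinearMap.proj 0 + (2 * x 1) • ContinuousLinearMap.proj 1

lemma hasD (x : Fin 3 → ℝ) :
    HasFDerivAt (fun y : Fin 3 → ℝ => (y 0) ^ 2 + (y 1) ^ 2 + 1) (Dlin x) x := by
  have h0 : HasFDerivAt (fun y : Fin 3 → ℝ => y 0)
      (ContinuousLinearMap.proj 0 : (Fin 3 → ℝ) →L[ℝ] ℝ) x :=
    (ContinuousLinearMap.proj 0 : (Fin 3 → ℝ) →L[ℝ] ℝ).hasFDerivAt
  have h1 : HasFDerivAt (fun y : Fin 3 → ℝ => y 1)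
      (ContinuousLinearMap.proj 1 : (Fin 3 → ℝ) →L[ℝ] ℝ) x :=
    (ContinuousLinearMap.proj 1 : (Fin 3 → ℝ) →L[ℝ] ℝ).hasFDerivAt
  have e : (fun y : Fin 3 → ℝ => (y 0) ^ 2 + (y 1) ^ 2 + 1)
      = fun y : Fin 3 → ℝ => (y 0 * y 0 + y 1 * y 1) + 1 := by
    funext y; ring
  rw [e]
  have := ((h0.mul h0).add (h1.mul h1)).add_const 1
  refine this.congr_fderiv ?_
  unfold Dlin
  ext v
  simp [Dlin]
  ring

lemma hasS (x : Fin 3 → ℝ) (c : ℝ) :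
    HasFDerivAt (fun y : Fin 3 → ℝ => ((y 0) ^ 2 + (y 1) ^ 2 + 1) ^ c)
      ((c * ((x 0) ^ 2 + (x 1) ^ 2 + 1) ^ (c - 1)) • Dlin x) x := by
  have hs : (0:ℝ) < (x 0) ^ 2 + (x 1) ^ 2 + 1 := by positivity
  exact (hasD x).rpow_const (Or.inl hs.ne')

/-- the field `V(x,y,z) = 2(x²+y²+1)^{-3/2}(−y,x,1)` is a steady incompressible
Euler flow on `ℝ³` with pressure `p(x,y,z) = −(x²+y²+1)^{-2}`: `div V = 0` and
`(V·∇)V = −∇p` at every point. -/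
theorem stmt11 :
    (∀ x : Fin 3 → ℝ, (∑ i, pd i (fun y => Vex y i) x) = 0) ∧
    (∀ (x : Fin 3 → ℝ) (i : Fin 3),
      (∑ j, Vex x j * pd j (fun y => Vex y i) x) = - pd i pex x) := by
  have main : ∀ x : Fin 3 → ℝ, True := fun _ => trivial
  -- fderiv computations
  have fd : ∀ x : Fin 3 → ℝ,
      (fderiv ℝ (fun y => Vex y 0) x =
        (2 * ((x 0) ^ 2 + (x 1) ^ 2 + 1) ^ (-(3/2) : ℝ)) •
            (-(ContinuousLinearMap.proj 1 : (Fin 3 → ℝ) →L[ℝ] ℝ)) +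
          (-(x 1)) • ((2:ℝ) • ((-(3/2) * ((x 0) ^ 2 + (x 1) ^ 2 + 1) ^ (-(3/2) - 1 : ℝ)) • Dlin x))) ∧
      (fderiv ℝ (fun y => Vex y 1) x =
        (2 * ((x 0) ^ 2 + (x 1) ^ 2 + 1) ^ (-(3/2) : ℝ)) •
            (ContinuousLinearMap.proj 0 : (Fin 3 → ℝ) →L[ℝ] ℝ) +
          (x 0) • ((2:ℝ) • ((-(3/2) * ((x 0) ^ 2 + (x 1) ^ 2 + 1) ^ (-(3/2) - 1 : ℝ)) • Dlin x))) ∧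
      (fderiv ℝ (fun y => Vex y 2) x =
        (2:ℝ) • ((-(3/2) * ((x 0) ^ 2 + (x 1) ^ 2 + 1) ^ (-(3/2) - 1 : ℝ)) • Dlin x)) ∧
      (fderiv ℝ pex x =
        -((-2 * ((x 0) ^ 2 + (x 1) ^ 2 + 1) ^ (-2 - 1 : ℝ)) • Dlin x)) := by
    intro x
    have hs : (0:ℝ) < (x 0) ^ 2 + (x 1) ^ 2 + 1 := by positivity
    have h0 : HasFDerivAt (fun y : Fin 3 → ℝ => y 0)
        (ContinuousLinearMap.proj 0 : (Fin 3 → ℝ) →L[ℝ] ℝ) x :=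
      (ContinuousLinearMap.proj 0 : (Fin 3 → ℝ) →L[ℝ] ℝ).hasFDerivAt
    have h1 : HasFDerivAt (fun y : Fin 3 → ℝ => y 1)
        (ContinuousLinearMap.proj 1 : (Fin 3 → ℝ) →L[ℝ] ℝ) x :=
      (ContinuousLinearMap.proj 1 : (Fin 3 → ℝ) →L[ℝ] ℝ).hasFDerivAt
    have hA := (hasS x (-(3/2))).const_mul 2
    refine ⟨?_, ?_, ?_, ?_⟩
    · have e0 : (fun y => Vex y 0)
          = fun y : Fin 3 → ℝ => (2 * ((y 0) ^ 2 + (y 1) ^ 2 + 1) ^ (-(3/2) : ℝ)) * (-(y 1)) := by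
        funext y; simp [Vex]
      rw [e0]
      exact (hA.mul h1.neg).fderiv
    · have e1 : (fun y => Vex y 1)
          = fun y : Fin 3 → ℝ => (2 * ((y 0) ^ 2 + (y 1) ^ 2 + 1) ^ (-(3/2) : ℝ)) * (y 0) := by
        funext y; simp [Vex]
      rw [e1]
      exact (hA.mul h0).fderiv
    · have e2 : (fun y => Vex y 2)
          = fun y : Fin 3 → ℝ => 2 * ((y 0) ^ 2 + (y 1) ^ 2 + 1) ^ (-(3/2) : ℝ) := by
        funext y; simp [Vex]
      rw [e2]
      exact hA.fderiv
    · have epex : pex = fun y : Fin 3 → ℝ => -(((y 0) ^ 2 + (y 1) ^ 2 + 1) ^ (-2 : ℝ)) := by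
        funext y
        have hy : (0:ℝ) < (y 0) ^ 2 + (y 1) ^ 2 + 1 := by positivity
        rw [pex, ← Real.rpow_natCast ((y 0) ^ 2 + (y 1) ^ 2 + 1) 2,
          ← Real.rpow_neg hy.le]
        norm_num
      rw [epex]
      exact ((hasS x (-2)).neg).fderiv
  constructor
  · intro x
    obtain ⟨f0, f1, f2, fp⟩ := fd x
    have hs : (0:ℝ) < (x 0) ^ 2 + (x 1) ^ 2 + 1 := by positivity
    rw [Fin.sum_univ_three]
    simp only [pd, f0, f1, f2]
    simp [Dlin, Pi.single_apply]
    ring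
  · intro x i
    obtain ⟨f0, f1, f2, fp⟩ := fd x
    have hs : (0:ℝ) < (x 0) ^ 2 + (x 1) ^ 2 + 1 := by positivity
    fin_cases i
    · show (∑ j, Vex x j * pd j (fun y => Vex y 0) x) = - pd 0 pex x
      rw [Fin.sum_univ_three]
      simp only [pd, f0, f1, f2, fp]
      simp [Dlin, Pi.single_apply, Vex]
      have hAA : ((x 0) ^ 2 + (x 1) ^ 2 + 1 : ℝ) ^ (-(3/2) : ℝ) *
          ((x 0) ^ 2 + (x 1) ^ 2 + 1 : ℝ) ^ (-(3/2) : ℝ)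
          = ((x 0) ^ 2 + (x 1) ^ 2 + 1 : ℝ) ^ (-2 - 1 : ℝ) := by
        rw [← Real.rpow_add hs]; norm_num
      linear_combination (-4 * x 0) * hAA
    · show (∑ j, Vex x j * pd j (fun y => Vex y 1) x) = - pd 1 pex x
      rw [Fin.sum_univ_three]
      simp only [pd, f0, f1, f2, fp]
      simp [Dlin, Pi.single_apply, Vex]
      have hAA : ((x 0) ^ 2 + (x 1) ^ 2 + 1 : ℝ) ^ (-(3/2) : ℝ) *
          ((x 0) ^ 2 + (x 1) ^ 2 + 1 : ℝ) ^ (-(3/2) : ℝ)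
          = ((x 0) ^ 2 + (x 1) ^ 2 + 1 : ℝ) ^ (-2 - 1 : ℝ) := by
        rw [← Real.rpow_add hs]; norm_num
      linear_combination (-4 * x 1) * hAA
    · show (∑ j, Vex x j * pd j (fun y => Vex y 2) x) = - pd 2 pex x
      rw [Fin.sum_univ_three]
      simp only [pd, f0, f1, f2, fp]
      simp [Dlin, Pi.single_apply, Vex]
      ring
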